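/- Let p(t) = at + b be an admissible Hilbert polynomial for subschemes of P^n, i.e., a > 0 and b ≥ −a(a−3)/2. Then the Gotzmann number of p(t) is r = a(a−1)/2 + b. -/
import Mathlib


noncomputable section

/-- The "binomial coefficient" `binomial(x, k)` with integer top argument, as a rational:
`(x)(x-1)⋯(x-k+1)/k!`. -/
def intBinom (x : ℤ) (k : ℕ) : ℚ :=
  (∏ j ∈ Finset.range k, ((x : ℚ) - (j : ℚ))) / (Nat.factorial k : ℚ)

/-- `r` is the Gotzmann number of the numerical polynomial `p` if `p` admits the Gotzmann
binomial decomposition `p(t) = Σ_{i=1}^{r} binomial(t + a_i - i + 1, a_i)` with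
`a_1 ≥ a_2 ≥ … ≥ a_r ≥ 0` (written below with `i` running over `Fin r`, i.e. `0`-indexed). -/
def IsGotzmannNumber (p : ℤ → ℚ) (r : ℕ) : Prop :=
  ∃ a : Fin r → ℕ, Antitone a ∧
    ∀ t : ℤ, p t = ∑ i : Fin r, intBinom (t + (a i : ℤ) - (i : ℤ)) (a i)

lemma intBinom_zero (x : ℤ) : intBinom x 0 = 1 := by simp [intBinom]

lemma intBinom_one (x : ℤ) : intBinom x 1 = (x : ℚ) := by
  simp [intBinom]

lemma intBinom_pos {x : ℤ} {k : ℕ} (h : (k : ℤ) ≤ x) : 0 < intBinom x k := by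
  apply div_pos
  · apply Finset.prod_pos
    intro j hj
    have hj' : j < k := Finset.mem_range.mp hj
    have : (j : ℚ) < (k : ℚ) := by exact_mod_cast hj'
    have hx : (k : ℚ) ≤ (x : ℚ) := by exact_mod_cast h
    linarith
  · exact_mod_cast Nat.factorial_pos k

lemma intBinom_pascal (x : ℤ) (k : ℕ) :
    intBinom (x + 1) (k + 1) = intBinom x (k + 1) + intBinom x k := by
  unfold intBinom
  have h1 : ∏ j ∈ Finset.range (k + 1), (((x + 1 : ℤ) : ℚ) - (j : ℚ))
      = (∏ j ∈ Finset.range k, ((x : ℚ) - (j : ℚ))) * ((x : ℚ) + 1) := by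
    rw [Finset.prod_range_succ']
    congr 1
    · apply Finset.prod_congr rfl
      intro j _
      push_cast
      ring
    · push_cast; ring
  have h2 : ∏ j ∈ Finset.range (k + 1), ((x : ℚ) - (j : ℚ))
      = (∏ j ∈ Finset.range k, ((x : ℚ) - (j : ℚ))) * ((x : ℚ) - (k : ℚ)) :=
    Finset.prod_range_succ _ _
  rw [h1, h2]
  have hf : ((k + 1).factorial : ℚ) = ((k : ℚ) + 1) * (k.factorial : ℚ) := by
    rw [Nat.factorial_succ]; push_cast; ring
  have hk0 : (k.factorial : ℚ) ≠ 0 := by exact_mod_cast (Nat.factorial_pos k).ne'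
  have hk1 : (k : ℚ) + 1 ≠ 0 := by positivity
  rw [hf]
  field_simp
  ring

lemma intBinom_second_diff (x : ℤ) (k : ℕ) :
    intBinom (x + 2) k - 2 * intBinom (x + 1) k + intBinom x k
      = if 2 ≤ k then intBinom x (k - 2) else 0 := by
  match k with
  | 0 => simp [intBinom_zero]; norm_num
  | 1 => simp [intBinom_one]; ring
  | (k + 2) =>
    have h1 : intBinom (x + 2) (k + 2) = intBinom (x + 1) (k + 2) + intBinom (x + 1) (k + 1) := by
      have := intBinom_pascal (x + 1) (k + 1); rw [show x + 1 + 1 = x + 2 by ring] at this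
      exact this
    have h2 : intBinom (x + 1) (k + 2) = intBinom x (k + 2) + intBinom x (k + 1) :=
      intBinom_pascal x (k + 1)
    have h3 : intBinom (x + 1) (k + 1) = intBinom x (k + 1) + intBinom x k :=
      intBinom_pascal x k
    simp only [show 2 ≤ k + 2 by omega, if_true, show k + 2 - 2 = k from rfl]
    rw [h1, h2, h3]
    ring

lemma sum_cast_range (m : ℕ) : ∑ k ∈ Finset.range m, (k : ℚ) = (m : ℚ) * ((m : ℚ) - 1) / 2 := by
  induction m with
  | zero => simp
  | succ n ih =>
    rw [Finset.sum_range_succ, ih]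
    push_cast
    ring

lemma gotzmann_sum_formula (r m : ℕ) (hm : m ≤ r) (t : ℤ) :
    ∑ i : Fin r, intBinom (t + ((if (i : ℕ) < m then 1 else 0 : ℕ) : ℤ) - (i : ℤ))
        (if (i : ℕ) < m then 1 else 0)
      = (m : ℚ) * (t : ℚ) + (r : ℚ) - (m : ℚ) * ((m : ℚ) - 1) / 2 := by
  have h0 : ∑ i : Fin r, intBinom (t + ((if (i : ℕ) < m then 1 else 0 : ℕ) : ℤ) - (i : ℤ))
        (if (i : ℕ) < m then 1 else 0)
      = ∑ k ∈ Finset.range r, intBinom (t + ((if k < m then 1 else 0 : ℕ) : ℤ) - (k : ℤ))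
        (if k < m then 1 else 0) := by
    exact Fin.sum_univ_eq_sum_range
      (fun k => intBinom (t + ((if k < m then 1 else 0 : ℕ) : ℤ) - (k : ℤ)) (if k < m then 1 else 0)) r
  rw [h0, Finset.range_eq_Ico, ← Finset.sum_Ico_consecutive _ (Nat.zero_le m) hm]
  have e1 : ∀ k ∈ Finset.Ico 0 m, intBinom (t + ((if k < m then 1 else 0 : ℕ) : ℤ) - (k : ℤ))
        (if k < m then 1 else 0) = (t : ℚ) + 1 - (k : ℚ) := by
    intro k hk
    have hkm : k < m := (Finset.mem_Ico.mp hk).2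
    simp only [hkm, if_true]
    rw [intBinom_one]
    push_cast
    ring
  have e2 : ∀ k ∈ Finset.Ico m r, intBinom (t + ((if k < m then 1 else 0 : ℕ) : ℤ) - (k : ℤ))
        (if k < m then 1 else 0) = 1 := by
    intro k hk
    have hkm : ¬ k < m := by have := (Finset.mem_Ico.mp hk).1; omega
    simp only [hkm, if_false]
    exact intBinom_zero _
  rw [Finset.sum_congr rfl e1, Finset.sum_congr rfl e2]
  rw [Finset.sum_const, Nat.card_Ico, nsmul_eq_mul, mul_one, Nat.cast_sub hm, ← Finset.range_eq_Ico,
    Finset.sum_sub_distrib, Finset.sum_const, Finset.card_range, sum_cast_range]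
  ring

/-- Let `p(t) = at + b` be an admissible Hilbert polynomial for subschemes of projective
space, i.e. `a > 0` and `b ≥ -a(a-3)/2`. Then the Gotzmann number of `p(t)` is
`r = a(a-1)/2 + b`. -/
theorem gotzmannNumber_linear (a b : ℤ) (ha : 0 < a) (hb : 2 * b ≥ -(a * (a - 3))) :
    ∃ r : ℕ, 2 * (r : ℤ) = a * (a - 1) + 2 * b ∧
      IsGotzmannNumber (fun t => (a : ℚ) * (t : ℚ) + (b : ℚ)) r ∧
      ∀ r' : ℕ, IsGotzmannNumber (fun t => (a : ℚ) * (t : ℚ) + (b : ℚ)) r' → r' = r := by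
  obtain ⟨c, hc⟩ : ∃ c : ℤ, a * (a - 1) = 2 * c := by
    obtain ⟨c, hc⟩ := Int.even_mul_succ_self (a - 1)
    exact ⟨c, by linarith [hc]⟩
  have hid : a * (a - 1) - a * (a - 3) = 2 * a := by ring
  have hcb : 0 ≤ c + b := by linarith
  set r : ℕ := (c + b).toNat with hrdef
  have hr : (r : ℤ) = c + b := Int.toNat_of_nonneg hcb
  have htr : 2 * (r : ℤ) = a * (a - 1) + 2 * b := by rw [hr]; linarith
  set m : ℕ := a.toNat with hmdef
  have hm : (m : ℤ) = a := Int.toNat_of_nonneg ha.le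
  have hmr : m ≤ r := by
    have : (m : ℤ) ≤ (r : ℤ) := by rw [hm, hr]; linarith
    exact_mod_cast this
  have hmQ : (m : ℚ) = (a : ℚ) := by exact_mod_cast hm
  have htrQ : 2 * (r : ℚ) = (a : ℚ) * ((a : ℚ) - 1) + 2 * (b : ℚ) := by exact_mod_cast htr
  refine ⟨r, htr, ⟨fun i => if (i : ℕ) < m then 1 else 0, ?_, ?_⟩, ?_⟩
  · intro i j hij
    have hij' : (i : ℕ) ≤ (j : ℕ) := hij
    dsimp only
    split_ifs <;> omega
  · intro t
    rw [gotzmann_sum_formula r m hmr t]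
    dsimp only
    rw [hmQ]
    linarith
  · rintro r' ⟨f, hfa, hf⟩
    rcases Nat.eq_zero_or_pos r' with hr0 | hr0
    · exfalso
      subst hr0
      have h0 := hf 0
      have h1 := hf 1
      simp only [Finset.univ_eq_empty, Finset.sum_empty] at h0 h1
      push_cast at h0 h1
      have : (a : ℚ) = 0 := by linarith
      have : a = 0 := by exact_mod_cast this
      omega
    -- Step A : all parts are ≤ 1
    have hle : ∀ i : Fin r', f i ≤ 1 := by
      set t₀ : ℤ := (r' : ℤ) with ht₀
      have e : ∀ i ∈ (Finset.univ : Finset (Fin r')),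
          (if 2 ≤ f i then intBinom (t₀ + (f i : ℤ) - (i : ℤ)) (f i - 2) else 0)
            = intBinom ((t₀ + 2) + (f i : ℤ) - (i : ℤ)) (f i)
              - 2 * intBinom ((t₀ + 1) + (f i : ℤ) - (i : ℤ)) (f i)
              + intBinom (t₀ + (f i : ℤ) - (i : ℤ)) (f i) := by
        intro i _
        have h2 : (t₀ + 2) + (f i : ℤ) - (i : ℤ) = (t₀ + (f i : ℤ) - (i : ℤ)) + 2 := by ring
        have h1 : (t₀ + 1) + (f i : ℤ) - (i : ℤ) = (t₀ + (f i : ℤ) - (i : ℤ)) + 1 := by ring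
        rw [h1, h2, intBinom_second_diff]
      have key : ∑ i : Fin r',
          (if 2 ≤ f i then intBinom (t₀ + (f i : ℤ) - (i : ℤ)) (f i - 2) else 0) = 0 := by
        rw [Finset.sum_congr rfl e, Finset.sum_add_distrib, Finset.sum_sub_distrib,
          ← Finset.mul_sum, ← hf t₀, ← hf (t₀ + 1), ← hf (t₀ + 2)]
        push_cast
        ring
      have hnn : ∀ i ∈ (Finset.univ : Finset (Fin r')),
          0 ≤ (if 2 ≤ f i then intBinom (t₀ + (f i : ℤ) - (i : ℤ)) (f i - 2) else 0) := by
        intro i _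
        split_ifs with h2
        · apply le_of_lt
          apply intBinom_pos
          have hi := i.isLt
          push_cast [Nat.cast_sub h2]
          omega
        · exact le_rfl
      have key2 := (Finset.sum_eq_zero_iff_of_nonneg hnn).mp key
      intro i
      by_contra hcon
      have h2 : 2 ≤ f i := by omega
      have := key2 i (Finset.mem_univ i)
      rw [if_pos h2] at this
      have hpos : 0 < intBinom (t₀ + (f i : ℤ) - (i : ℤ)) (f i - 2) := by
        apply intBinom_pos
        have hi := i.isLt
        push_cast [Nat.cast_sub h2]
        omega
      exact hpos.ne' this
    -- Step B : the parts are exactly the first m' ones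
    set m' : ℕ := (Finset.univ.filter fun i : Fin r' => f i = 1).card with hm'def
    have hmr' : m' ≤ r' := by
      have := Finset.card_filter_le (Finset.univ : Finset (Fin r')) (fun i : Fin r' => f i = 1)
      simpa using this
    have hiff : ∀ i : Fin r', f i = 1 ↔ (i : ℕ) < m' := by
      intro i
      constructor
      · intro h1
        have hsub : Finset.Iic i ⊆ Finset.univ.filter fun j : Fin r' => f j = 1 := by
          intro j hj
          have hji : j ≤ i := Finset.mem_Iic.mp hj
          have := hfa hji
          have := hle j
          simp only [Finset.mem_filter, Finset.mem_univ, true_and]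
          omega
        have := Finset.card_le_card hsub
        rw [Fin.card_Iic] at this
        omega
      · intro h1
        by_contra hne
        have hf0 : f i = 0 := by have := hle i; omega
        have hsub : (Finset.univ.filter fun j : Fin r' => f j = 1) ⊆ Finset.Iio i := by
          intro j hj
          simp only [Finset.mem_filter, Finset.mem_univ, true_and] at hj
          rw [Finset.mem_Iio]
          by_contra hji
          push_neg at hji
          have := hfa hji
          omega
        have := Finset.card_le_card hsub
        rw [Fin.card_Iio] at this
        omega
    have hfun : ∀ i : Fin r', f i = if (i : ℕ) < m' then 1 else 0 := by
      intro i
      by_cases h : (i : ℕ) < m'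
      · simp [h, (hiff i).mpr h]
      · have := hle i
        have := (hiff i).not.mpr (by omega)
        simp [h]
        omega
    -- Step C : evaluate
    have hf' : ∀ t : ℤ, (a : ℚ) * (t : ℚ) + (b : ℚ)
        = (m' : ℚ) * (t : ℚ) + (r' : ℚ) - (m' : ℚ) * ((m' : ℚ) - 1) / 2 := by
      intro t
      rw [show (a : ℚ) * (t : ℚ) + (b : ℚ) = (fun t : ℤ => (a : ℚ) * (t : ℚ) + (b : ℚ)) t from rfl,
        hf t, ← gotzmann_sum_formula r' m' hmr' t]
      exact Finset.sum_congr rfl fun i _ => by rw [hfun i]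
    have h0 := hf' 0
    have h1 := hf' 1
    push_cast at h0 h1
    have haQ : (a : ℚ) = (m' : ℚ) := by linarith
    have haZ : a = (m' : ℤ) := by exact_mod_cast haQ
    have hQ : 2 * (r' : ℚ) = (m' : ℚ) * ((m' : ℚ) - 1) + 2 * (b : ℚ) := by linarith
    have hZ : 2 * (r' : ℤ) = (m' : ℤ) * ((m' : ℤ) - 1) + 2 * b := by exact_mod_cast hQ
    have : 2 * (r' : ℤ) = 2 * (r : ℤ) := by
      rw [hZ, htr, ← haZ]
    omega

end
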